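/- Let n be a natural number, I : Set (Fin n), τ a permutation of Fin n, c a permutation of Fin n, and i : Fin n with i in the support of c. Let ν ∈ H(I) be a permutation that moreover fixes every element of the support of c. Then for every family 𝒢 : Set (Set (Fin n)), the number of σ ∈ H(I) with Equiv.Perm.cycleOf (σ⁻¹ * τ * σ) i = c and 𝒢[σ⁻¹ * τ * σ] = 𝒢 equals the number of σ ∈ H(I) with Equiv.Perm.cycleOf (σ⁻¹ * τ * σ) i = c and 𝒢[σ⁻¹ * τ * σ] = (fun B => ν '' B) '' 𝒢. (This is the security of the secure grouping protocol: conditioned on player i's cycle being c, the rest of the grouping is uniformly distributed up to relabelings fixing i's group, so player i learns nothing about the groups not containing i.) -/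

import Mathlib

/-- The grouping (orbit partition) specified by a permutation. -/
def grouping {n : ℕ} (π : Equiv.Perm (Fin n)) : Set (Set (Fin n)) :=
  Set.range (fun i => {x | Equiv.Perm.SameCycle π i x})

/-- The set of permutations fixing every element of `I` pointwise. -/
def fixesSet {n : ℕ} (I : Set (Fin n)) : Set (Equiv.Perm (Fin n)) :=
  {σ | ∀ a ∈ I, σ a = a}

lemma cycleOf_conj' {n : ℕ} (π g : Equiv.Perm (Fin n)) (x : Fin n) :
    Equiv.Perm.cycleOf (g * π * g⁻¹) x = g * Equiv.Perm.cycleOf π (g⁻¹ x) * g⁻¹ := by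
  ext y
  simp only [Equiv.Perm.cycleOf_apply, Equiv.Perm.sameCycle_conj, Equiv.Perm.mul_apply]
  split_ifs with h
  · simp
  · simp

lemma grouping_conj {n : ℕ} (π g : Equiv.Perm (Fin n)) :
    grouping (g * π * g⁻¹) = (fun B => ⇑g '' B) '' grouping π := by
  unfold grouping
  ext S
  constructor
  · rintro ⟨j, rfl⟩
    exact ⟨{x | Equiv.Perm.SameCycle π (g⁻¹ j) x}, ⟨g⁻¹ j, rfl⟩, by
      ext y
      simp only [Set.mem_image, Set.mem_setOf_eq, Equiv.Perm.sameCycle_conj]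
      constructor
      · rintro ⟨z, hz, rfl⟩; simpa using hz
      · intro h; exact ⟨g⁻¹ y, h, by simp⟩⟩
  · rintro ⟨B, ⟨j, rfl⟩, rfl⟩
    refine ⟨g j, ?_⟩
    ext y
    simp only [Set.mem_image, Set.mem_setOf_eq, Equiv.Perm.sameCycle_conj]
    constructor
    · intro h; exact ⟨g⁻¹ y, by simpa using h, by simp⟩
    · rintro ⟨z, hz, rfl⟩; simpa using hz

lemma conj_fix {n : ℕ} (c ν : Equiv.Perm (Fin n)) (hνc : ∀ x ∈ c.support, ν x = x) :
    ν * c * ν⁻¹ = c := by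
  have hinv : ∀ x ∈ c.support, ν⁻¹ x = x := by
    intro x hx
    rw [Equiv.Perm.inv_eq_iff_eq]
    exact (hνc x hx).symm
  ext x
  simp only [Equiv.Perm.mul_apply]
  by_cases hx : x ∈ c.support
  · rw [hinv x hx, hνc (c x) (Equiv.Perm.apply_mem_support.mpr hx)]
  · have h1 : ν⁻¹ x ∉ c.support := by
      intro h
      refine hx ?_
      have e := hνc _ h
      rw [← Equiv.Perm.mul_apply, mul_inv_cancel, Equiv.Perm.one_apply] at e
      rw [e]
      exact h
    have : c (ν⁻¹ x) = ν⁻¹ x := Equiv.Perm.notMem_support.mp h1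
    rw [this]
    simp [Equiv.Perm.notMem_support.mp hx]

theorem secure_grouping_security {n : ℕ} (I : Set (Fin n)) (τ c : Equiv.Perm (Fin n))
    (i : Fin n) (hi : i ∈ c.support) (ν : Equiv.Perm (Fin n)) (hνI : ν ∈ fixesSet I)
    (hνc : ∀ x ∈ c.support, ν x = x) (𝒢 : Set (Set (Fin n))) :
    Nat.card {σ : Equiv.Perm (Fin n) // σ ∈ fixesSet I ∧
        Equiv.Perm.cycleOf (σ⁻¹ * τ * σ) i = c ∧ grouping (σ⁻¹ * τ * σ) = 𝒢} =
      Nat.card {σ : Equiv.Perm (Fin n) // σ ∈ fixesSet I ∧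
        Equiv.Perm.cycleOf (σ⁻¹ * τ * σ) i = c ∧
        grouping (σ⁻¹ * τ * σ) = (fun B => ⇑ν '' B) '' 𝒢} := by
  have hνI' : ν⁻¹ ∈ fixesSet I := by
    intro a ha
    rw [Equiv.Perm.inv_eq_iff_eq]; exact (hνI a ha).symm
  have hνi : ν i = i := hνc i hi
  have hνi' : ν⁻¹ i = i := by rw [Equiv.Perm.inv_eq_iff_eq]; exact hνi.symm
  have key : ∀ σ : Equiv.Perm (Fin n),
      (σ ∈ fixesSet I ∧ Equiv.Perm.cycleOf (σ⁻¹ * τ * σ) i = c ∧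
        grouping (σ⁻¹ * τ * σ) = 𝒢) →
      ((σ * ν⁻¹) ∈ fixesSet I ∧ Equiv.Perm.cycleOf ((σ * ν⁻¹)⁻¹ * τ * (σ * ν⁻¹)) i = c ∧
        grouping ((σ * ν⁻¹)⁻¹ * τ * (σ * ν⁻¹)) = (fun B => ⇑ν '' B) '' 𝒢) := by
    rintro σ ⟨h1, h2, h3⟩
    have hconj : (σ * ν⁻¹)⁻¹ * τ * (σ * ν⁻¹) = ν * (σ⁻¹ * τ * σ) * ν⁻¹ := by
      group
    refine ⟨?_, ?_, ?_⟩
    · intro a ha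
      simp only [Equiv.Perm.mul_apply, hνI' a ha]
      exact h1 a ha
    · rw [hconj, cycleOf_conj', hνi', h2, conj_fix c ν hνc]
    · rw [hconj, grouping_conj, h3]
  -- inverse direction lemma, with ν⁻¹ in place of ν
  have hνc' : ∀ x ∈ c.support, ν⁻¹ x = x := by
    intro x hx
    rw [Equiv.Perm.inv_eq_iff_eq]; exact (hνc x hx).symm
  have key' : ∀ σ : Equiv.Perm (Fin n),
      (σ ∈ fixesSet I ∧ Equiv.Perm.cycleOf (σ⁻¹ * τ * σ) i = c ∧
        grouping (σ⁻¹ * τ * σ) = (fun B => ⇑ν '' B) '' 𝒢) →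
      ((σ * ν) ∈ fixesSet I ∧ Equiv.Perm.cycleOf ((σ * ν)⁻¹ * τ * (σ * ν)) i = c ∧
        grouping ((σ * ν)⁻¹ * τ * (σ * ν)) = 𝒢) := by
    rintro σ ⟨h1, h2, h3⟩
    have hconj : (σ * ν)⁻¹ * τ * (σ * ν) = ν⁻¹ * (σ⁻¹ * τ * σ) * ν := by
      group
    have hconj' : ν⁻¹ * (σ⁻¹ * τ * σ) * ν = ν⁻¹ * (σ⁻¹ * τ * σ) * (ν⁻¹)⁻¹ := by simp
    refine ⟨?_, ?_, ?_⟩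
    · intro a ha
      simp only [Equiv.Perm.mul_apply, hνI a ha]
      exact h1 a ha
    · rw [hconj, hconj', cycleOf_conj']
      simp only [inv_inv]
      rw [hνi, h2]
      have := conj_fix c ν⁻¹ hνc'
      simpa using this
    · rw [hconj, hconj', grouping_conj, h3]
      ext S
      simp only [Set.mem_image]
      constructor
      · rintro ⟨B, ⟨A, hA, rfl⟩, rfl⟩
        convert hA using 1
        ext y
        simp only [Set.mem_image]
        constructor
        · rintro ⟨z, ⟨w, hw, rfl⟩, rfl⟩; simpa using hw
        · intro hy; exact ⟨ν y, ⟨y, hy, rfl⟩, by simp⟩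
      · intro hS
        refine ⟨⇑ν '' S, ⟨S, hS, rfl⟩, ?_⟩
        ext y
        simp only [Set.mem_image]
        constructor
        · rintro ⟨z, ⟨w, hw, rfl⟩, rfl⟩; simpa using hw
        · intro hy; exact ⟨ν y, ⟨y, hy, rfl⟩, by simp⟩
  refine Nat.card_eq_of_bijective (fun x => ⟨x.1 * ν⁻¹, key x.1 x.2⟩) ?_
  constructor
  · rintro ⟨a, ha⟩ ⟨b, hb⟩ h
    simp only [Subtype.mk.injEq, mul_left_inj] at h
    exact Subtype.ext h
  · rintro ⟨σ, hσ⟩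
    refine ⟨⟨σ * ν, key' σ hσ⟩, ?_⟩
    ext x
    simp
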